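/- Let W = (α : S → Q_t, β : Q_t → P) be a closed and consistent wrapper and ρ : S' → F_I S' a recursive coalgebra. If the extended wrapper W' = ([α, [i_t, δ_t]^ρ] : S + S' → Q_t, β) is also closed and consistent, then W is correct up to ρ, i.e., o_W ∘ [i_W, δ_W]^ρ = o_t ∘ [i_t, δ_t]^ρ (the ρ-restricted language of the hypothesis H_W equals that of the target). -/

import Mathlib

open CategoryTheory Limits

/-- The functor `F_I = I + F(-)`. -/
noncomputable def FIfun {C : Type*} [Category C] [HasBinaryCoproducts C]
    (F : C ⥤ C) (I : C) : C ⥤ C where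
  obj X := I ⨿ F.obj X
  map f := coprod.map (𝟙 I) (F.map f)

/-- Resolving counterexamples: if `W = (α, β)` is a closed and consistent wrapper with
hypothesis `(H, δ_W, i_W, o_W)`, `ρ : S' → F_I S'` is recursive with `f = [i_t, δ_t]^ρ`,
and the extended wrapper `W' = ([α, f], β)` is also closed and consistent, then `W` is correct
up to `ρ`: the `ρ`-restricted language of the hypothesis equals that of the target, i.e.
`[i_W, δ_W]^ρ ≫ o_W = f ≫ o_t`. -/
theorem stmt18 {C : Type*} [Category C] [HasBinaryCoproducts C]
    (E M : MorphismProperty C)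
    (hE : ∀ {X Y : C} (f : X ⟶ Y), E f → Epi f)
    (hM : ∀ {X Y : C} (f : X ⟶ Y), M f → Mono f)
    (fac : ∀ {X Y : C} (f : X ⟶ Y),
      ∃ (Z : C) (e : X ⟶ Z) (m : Z ⟶ Y), E e ∧ M m ∧ e ≫ m = f)
    (fill : ∀ {X Y Z W : C} (e : X ⟶ Y) (m : Z ⟶ W) (f : X ⟶ Z) (g : Y ⟶ W),
      E e → M m → f ≫ m = e ≫ g → ∃! d : Y ⟶ Z, e ≫ d = f ∧ d ≫ m = g)
    (F : C ⥤ C) (I O : C)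
    (hFE : ∀ {X Y : C} (f : X ⟶ Y), E f → E (F.map f))
    (Qt : C) (δt : F.obj Qt ⟶ Qt) (it : I ⟶ Qt) (ot : Qt ⟶ O)
    (S : C) (α : S ⟶ Qt) (P : C) (β : Qt ⟶ P)
    -- factorisation of τ_W = α ≫ β through H
    (H : C) (e : S ⟶ H) (m : H ⟶ P) (he : E e) (hm : M m) (hem : e ≫ m = α ≫ β)
    -- W is closed and consistent, with hypothesis structure (i_W, δ_W, o_W)
    (iW : I ⟶ H) (hiW : iW ≫ m = it ≫ β)
    (closeW : F.obj S ⟶ H) (hclose : closeW ≫ m = F.map α ≫ δt ≫ β)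
    (oW : H ⟶ O) (hoW : e ≫ oW = α ≫ ot)
    (consW : F.obj H ⟶ P) (hcons : F.map e ≫ consW = F.map α ≫ δt ≫ β)
    (δW : F.obj H ⟶ H) (hδW1 : F.map e ≫ δW = closeW) (hδW2 : δW ≫ m = consW)
    -- a recursive coalgebra ρ with f = [i_t, δ_t]^ρ
    (S' : C) (ρ : S' ⟶ (FIfun F I).obj S')
    (hrec : ∀ (X : C) (x : (FIfun F I).obj X ⟶ X),
      ∃! u : S' ⟶ X, u = ρ ≫ (FIfun F I).map u ≫ x)
    (f : S' ⟶ Qt) (hf : f = ρ ≫ (FIfun F I).map f ≫ coprod.desc it δt)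
    -- factorisation of τ_{W'} for W' = ([α, f], β)
    (H' : C) (e' : S ⨿ S' ⟶ H') (m' : H' ⟶ P) (he' : E e') (hm' : M m')
    (hem' : e' ≫ m' = coprod.desc α f ≫ β)
    -- W' is closed and consistent
    (hW'closed : (∃ iW' : I ⟶ H', iW' ≫ m' = it ≫ β) ∧
      (∃ cl : F.obj (S ⨿ S') ⟶ H', cl ≫ m' = F.map (coprod.desc α f) ≫ δt ≫ β))
    (hW'cons : (∃ oW' : H' ⟶ O, e' ≫ oW' = coprod.desc α f ≫ ot) ∧
      (∃ cs : F.obj H' ⟶ P, F.map e' ≫ cs = F.map (coprod.desc α f) ≫ δt ≫ β)) :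
    ∀ g : S' ⟶ H, g = ρ ≫ (FIfun F I).map g ≫ coprod.desc iW δW → g ≫ oW = f ≫ ot := by
  intro g hg
  obtain ⟨⟨iW', hiW'⟩, ⟨cl, hcl⟩⟩ := hW'closed
  obtain ⟨⟨oW', hoW'⟩, ⟨cs, hcs⟩⟩ := hW'cons
  haveI : Epi e := hE e he
  haveI : Epi e' := hE e' he'
  haveI : Mono m' := hM m' hm'
  haveI : Epi (F.map e) := hE _ (hFE e he)
  -- δ' : the transition structure on H'
  obtain ⟨δ', ⟨hδ'1, hδ'2⟩, -⟩ :=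
    fill (F.map e') m' cl cs (hFE e' he') hm' (by rw [hcl, hcs])
  -- ψ : H ⟶ H' comparing the hypotheses
  obtain ⟨ψ, ⟨hψ1, hψ2⟩, -⟩ :=
    fill e m' (coprod.inl ≫ e') m he hm' (by
      rw [Category.assoc, hem', hem, ← Category.assoc, coprod.inl_desc])
  -- ψ preserves the output
  have hψo : ψ ≫ oW' = oW := by
    rw [← cancel_epi e, ← Category.assoc, hψ1, Category.assoc, hoW',
      ← Category.assoc, coprod.inl_desc, hoW]
  -- ψ preserves the initial state
  have hψi : iW ≫ ψ = iW' := by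
    rw [← cancel_mono m', Category.assoc, hψ2, hiW, hiW']
  -- ψ preserves transitions
  have hψδ : δW ≫ ψ = F.map ψ ≫ δ' := by
    rw [← cancel_epi (F.map e), ← cancel_mono m']
    simp only [Category.assoc]
    rw [hψ2, reassoc_of% hδW1, hclose, hδ'2, ← F.map_comp_assoc, hψ1,
      F.map_comp_assoc, hcs, ← F.map_comp_assoc, coprod.inl_desc]
  -- the unique coalgebra-to-algebra morphism S' ⟶ H'
  obtain ⟨u, -, huniq⟩ := hrec H' (coprod.desc iW' δ')
  have h1 : g ≫ ψ = u := by
    apply huniq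
    conv_lhs => rw [hg]
    simp only [FIfun, Category.assoc, F.map_comp, coprod.map_desc_assoc,
      coprod.map_desc, coprod.desc_comp, Category.id_comp, hψi, hψδ]
    erw [Category.assoc, coprod.desc_comp, Category.assoc, hψi, hψδ]
  have h2 : coprod.inr ≫ e' = u := by
    apply huniq
    rw [← cancel_mono m']
    rw [Category.assoc, hem', coprod.inr_desc_assoc]
    conv_lhs => rw [hf]
    simp only [FIfun, Category.assoc, F.map_comp, coprod.map_desc_assoc,
      Category.id_comp]
    erw [Category.assoc, Category.assoc, coprod.map_desc, coprod.map_desc_assoc, Category.assoc,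
      coprod.desc_comp, coprod.desc_comp]
    simp only [Category.id_comp]
    simp only [Category.assoc]
    rw [hiW', hδ'2, hcs, ← F.map_comp_assoc, coprod.inr_desc]
  -- conclude
  calc g ≫ oW = g ≫ ψ ≫ oW' := by rw [hψo]
    _ = (coprod.inr ≫ e') ≫ oW' := by rw [← Category.assoc, h1, h2]
    _ = f ≫ ot := by rw [Category.assoc, hoW', coprod.inr_desc_assoc]
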